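/- (Theorem 2, minimum invariance, attainment.) Suppose that for each 0 ≤ k < N there exists a Borel-measurable map μ_k^* : X → U such that 1_A(x) ∫_X W_{k+1}^min(y) T(dy|x,μ_k^*(x)) = W_k^min(x) for all x ∈ X (i.e. the infimum in the DP recursion is attained by a measurable selector). Then the Markov policy π^* = (μ_0^*,…,μ_{N−1}^*) satisfies V_k^{π^*}(x) = W_k^min(x) for all 0 ≤ k ≤ N and x ∈ X, where V_k^{π^*}(x) = P_{k,x}^{π^*}( x_j ∈ A for all k ≤ j ≤ N ); in particular W_k^min(x) = min_{π} P_{k,x}^π( x_j ∈ A for all k ≤ j ≤ N ), the minimum being over all Markov policies. -/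

import Mathlib

open MeasureTheory ProbabilityTheory Set

noncomputable section

namespace StochasticSafety

variable {X U : Type*} [MeasurableSpace X] [MeasurableSpace U]

/-- A Markov policy: a sequence of (Borel-)measurable maps from states to actions. -/
structure Policy (X U : Type*) [MeasurableSpace X] [MeasurableSpace U] where
  act : ℕ → X → U
  measurable_act : ∀ k, Measurable (act k)

/-- The closed-loop kernel `κ_k^π(·|x) = T(·|x, μ_k(x))` of a policy at time `k`. -/
def Policy.kernel (T : Kernel (X × U) X) (π : Policy X U) (k : ℕ) : Kernel X X :=
  T.comap (fun x => (x, π.act k x)) (measurable_id.prodMk (π.measurable_act k))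

/-- One step of the closed-loop trajectory evolution at time `j`: given the trajectory
built so far, sample `y` from `κ` applied at coordinate `j` and record it at
coordinate `j + 1`. -/
def step (κ : Kernel X X) (j : ℕ) : Kernel (ℕ → X) (ℕ → X) :=
  Kernel.map (Kernel.id ×ₖ κ.comap (fun ω => ω j) (measurable_pi_apply j))
    (fun p => Function.update p.1 (j + 1) p.2)

/-- Kernel describing `m` steps of the trajectory evolution, starting at time `k`,
under the time-dependent kernels `κ`. -/
def evolve (κ : ℕ → Kernel X X) : ℕ → ℕ → Kernel (ℕ → X) (ℕ → X)
  | _, 0 => Kernel.id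
  | k, (m + 1) => (evolve κ (k + 1) m) ∘ₖ step (κ k) k

/-- The law `P_{k,x}^π` of the closed-loop trajectory `(x_k, …, x_N)` started at `x`
at time `k` under policy `π` (finite Ionescu–Tulcea composition of the closed-loop
kernels): the states `x_k, …, x_N` are recorded in coordinates `k, …, N` of `ℕ → X`,
all other coordinates carry the irrelevant initial value `x`. -/
def trajLaw (T : Kernel (X × U) X) (π : Policy X U) (N k : ℕ) (x : X) :
    Measure (ℕ → X) :=
  evolve (π.kernel T) k (N - k) (fun _ => x)

/-- The event that the trajectory stays in `A` at all times `j` with `k ≤ j ≤ N`. -/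
def safeEvent (A : Set X) (k N : ℕ) : Set (ℕ → X) :=
  {ω | ∀ j, k ≤ j → j ≤ N → ω j ∈ A}

/-- The event that the trajectory visits `A` at some time `j` with `k ≤ j ≤ N`. -/
def reachEvent (A : Set X) (k N : ℕ) : Set (ℕ → X) :=
  {ω | ∃ j, k ≤ j ∧ j ≤ N ∧ ω j ∈ A}


-- Auxiliary material
section Aux

-- auxiliary material

lemma measurable_update_pair (j : ℕ) :
    Measurable (fun p : (ℕ → X) × X => Function.update p.1 (j + 1) p.2) :=
  measurable_update'

lemma step_apply (κ : Kernel X X) [IsMarkovKernel κ] (j : ℕ) (ω : ℕ → X) :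
    step κ j ω = (κ (ω j)).map (fun y => Function.update ω (j + 1) y) := by
  rw [step, Kernel.map_apply _ (measurable_update_pair j), Kernel.prod_apply,
    Kernel.id_apply, Kernel.comap_apply, Measure.dirac_prod,
    Measure.map_map (measurable_update_pair j) measurable_prodMk_left]
  rfl

lemma evolve_succ_apply (κ : ℕ → Kernel X X) [∀ i, IsMarkovKernel (κ i)] (k m : ℕ)
    (ω : ℕ → X) {S : Set (ℕ → X)} (hS : MeasurableSet S) :
    evolve κ k (m + 1) ω S
      = ∫⁻ y, evolve κ (k + 1) m (Function.update ω (k + 1) y) S ∂(κ k (ω k)) := by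
  rw [show evolve κ k (m+1) = (evolve κ (k + 1) m) ∘ₖ step (κ k) k from rfl,
    Kernel.comp_apply' _ _ _ hS, step_apply,
    lintegral_map (Kernel.measurable_coe _ hS) (measurable_update ω)]

lemma measurableSet_safeEvent {A : Set X} (hA : MeasurableSet A) (k n : ℕ) :
    MeasurableSet (safeEvent A k n) := by
  have : safeEvent A k n = ⋂ j, {ρ : ℕ → X | k ≤ j → j ≤ n → ρ j ∈ A} := by
    ext ρ; simp [safeEvent]
  rw [this]
  refine MeasurableSet.iInter fun j => ?_
  by_cases h1 : k ≤ j
  · by_cases h2 : j ≤ n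
    · have : {ρ : ℕ → X | k ≤ j → j ≤ n → ρ j ∈ A} = (fun ρ : ℕ → X => ρ j) ⁻¹' A := by
        ext ρ; simp [h1, h2]
      rw [this]; exact measurable_pi_apply j hA
    · have : {ρ : ℕ → X | k ≤ j → j ≤ n → ρ j ∈ A} = univ := by
        ext ρ; simp [h2]
      simp [this]
  · have : {ρ : ℕ → X | k ≤ j → j ≤ n → ρ j ∈ A} = univ := by
      ext ρ; simp [h1]
    simp [this]

variable {A : Set X}

lemma evolve_markov (κ : ℕ → Kernel X X) [∀ i, IsMarkovKernel (κ i)] :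
    ∀ m k, IsMarkovKernel (evolve κ k m)
  | 0, k => by rw [show evolve κ k 0 = Kernel.id from rfl]; infer_instance
  | (m + 1), k => by
    rw [show evolve κ k (m + 1) = (evolve κ (k + 1) m) ∘ₖ step (κ k) k from rfl]
    haveI := evolve_markov κ m (k + 1)
    haveI : IsMarkovKernel (step (κ k) k) :=
      Kernel.IsMarkovKernel.map _ (measurable_update_pair k)
    infer_instance

def polVal (A : Set X) (κ : ℕ → Kernel X X) : ℕ → ℕ → X → ENNReal
  | _, 0, x => A.indicator 1 x
  | k, (m + 1), x => A.indicator 1 x * ∫⁻ y, polVal A κ (k + 1) m y ∂(κ k x)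

section SB
variable [MeasurableSingletonClass X]

lemma evolve_eval_eq (κ : ℕ → Kernel X X) [∀ i, IsMarkovKernel (κ i)] :
    ∀ (m k : ℕ) (ω : ℕ → X) (j : ℕ), j ≤ k →
      evolve κ k m ω ((fun ρ : ℕ → X => ρ j) ⁻¹' {ω j}) = 1
  | 0, k, ω, j, hj => by
    rw [show evolve κ k 0 = Kernel.id from rfl, Kernel.id_apply,
      Measure.dirac_apply_of_mem]
    exact rfl
  | (m + 1), k, ω, j, hj => by
    have hS : MeasurableSet ((fun ρ : ℕ → X => ρ j) ⁻¹' {ω j}) :=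
      measurable_pi_apply j (measurableSet_singleton (ω j))
    rw [evolve_succ_apply κ k m ω hS]
    have h1 : ∀ y : X,
        evolve κ (k + 1) m (Function.update ω (k + 1) y)
          ((fun ρ : ℕ → X => ρ j) ⁻¹' {ω j}) = 1 := by
      intro y
      have hupd : Function.update ω (k + 1) y j = ω j :=
        Function.update_of_ne (by omega) _ _
      have := evolve_eval_eq κ m (k + 1) (Function.update ω (k + 1) y) j (by omega)
      rwa [hupd] at this
    simp only [h1]
    simp

lemma evolve_inter_eval (κ : ℕ → Kernel X X) [∀ i, IsMarkovKernel (κ i)]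
    (hA : MeasurableSet A) (m k : ℕ) (ω : ℕ → X) {S : Set (ℕ → X)}
    (hS : MeasurableSet S) :
    evolve κ (k + 1) m ω ((fun ρ : ℕ → X => ρ k) ⁻¹' A ∩ S)
      = A.indicator 1 (ω k) * evolve κ (k + 1) m ω S := by
  haveI := evolve_markov κ m (k + 1)
  set μ := evolve κ (k + 1) m ω with hμ
  have hfix : μ ((fun ρ : ℕ → X => ρ k) ⁻¹' {ω k}) = 1 :=
    evolve_eval_eq κ m (k + 1) ω k (by omega)
  have hfixm : MeasurableSet ((fun ρ : ℕ → X => ρ k) ⁻¹' {ω k}) :=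
    measurable_pi_apply k (measurableSet_singleton (ω k))
  have hcompl : μ ((fun ρ : ℕ → X => ρ k) ⁻¹' {ω k})ᶜ = 0 := by
    rw [measure_compl hfixm (measure_ne_top μ _), hfix, measure_univ, tsub_self]
  by_cases hx : ω k ∈ A
  · rw [indicator_of_mem hx, Pi.one_apply, one_mul]
    refine le_antisymm (measure_mono inter_subset_right) ?_
    calc μ S ≤ μ (((fun ρ : ℕ → X => ρ k) ⁻¹' A ∩ S)
            ∪ ((fun ρ : ℕ → X => ρ k) ⁻¹' {ω k})ᶜ) := by
          refine measure_mono fun ρ hρ => ?_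
          by_cases hρk : ρ k = ω k
          · exact Or.inl ⟨by simp [Set.mem_preimage, hρk, hx], hρ⟩
          · exact Or.inr hρk
      _ ≤ μ ((fun ρ : ℕ → X => ρ k) ⁻¹' A ∩ S)
            + μ ((fun ρ : ℕ → X => ρ k) ⁻¹' {ω k})ᶜ :=
          measure_union_le _ _
      _ = μ ((fun ρ : ℕ → X => ρ k) ⁻¹' A ∩ S) := by rw [hcompl, add_zero]
  · rw [indicator_of_notMem hx, zero_mul]
    refine le_antisymm ?_ zero_le
    calc μ ((fun ρ : ℕ → X => ρ k) ⁻¹' A ∩ S)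
          ≤ μ ((fun ρ : ℕ → X => ρ k) ⁻¹' {ω k})ᶜ := by
          refine measure_mono fun ρ hρ => fun hρk => hx ?_
          have : ρ k ∈ A := hρ.1
          rwa [show ρ k = ω k from hρk] at this
      _ = 0 := hcompl

lemma evolve_safe (κ : ℕ → Kernel X X) [∀ i, IsMarkovKernel (κ i)]
    (hA : MeasurableSet A) :
    ∀ m k (ω : ℕ → X), evolve κ k m ω (safeEvent A k (k + m)) = polVal A κ k m (ω k)
  | 0, k, ω => by
    have hset : safeEvent A k (k + 0) = (fun ρ : ℕ → X => ρ k) ⁻¹' A := by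
      ext ρ
      constructor
      · intro h; exact h k le_rfl (by omega)
      · intro h j hj1 hj2
        have : j = k := by omega
        rwa [this]
    rw [show evolve κ k 0 = Kernel.id from rfl, Kernel.id_apply, hset,
      Measure.dirac_apply' _ (measurable_pi_apply k hA)]
    by_cases hx : ω k ∈ A
    · simp [polVal, indicator_of_mem hx, mem_preimage.mpr hx,
        indicator_of_mem (show ω ∈ (fun ρ : ℕ → X => ρ k) ⁻¹' A from hx)]
    · simp [polVal, indicator_of_notMem hx,
        indicator_of_notMem (show ω ∉ (fun ρ : ℕ → X => ρ k) ⁻¹' A from hx)]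
  | (m + 1), k, ω => by
    have hSm : MeasurableSet (safeEvent A (k + 1) (k + 1 + m)) :=
      measurableSet_safeEvent hA _ _
    have hsplit : safeEvent A k (k + (m + 1))
        = (fun ρ : ℕ → X => ρ k) ⁻¹' A ∩ safeEvent A (k + 1) (k + 1 + m) := by
      ext ρ
      constructor
      · intro h
        exact ⟨h k le_rfl (by omega), fun j hj1 hj2 => h j (by omega) (by omega)⟩
      · rintro ⟨h1, h2⟩ j hj1 hj2
        rcases eq_or_lt_of_le hj1 with rfl | hlt
        · exact h1
        · exact h2 j (by omega) (by omega)
    rw [hsplit, evolve_succ_apply κ k m ω ((measurable_pi_apply k hA).inter hSm)]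
    have hinner : ∀ y : X,
        evolve κ (k + 1) m (Function.update ω (k + 1) y)
            ((fun ρ : ℕ → X => ρ k) ⁻¹' A ∩ safeEvent A (k + 1) (k + 1 + m))
          = A.indicator 1 (ω k) * polVal A κ (k + 1) m y := by
      intro y
      rw [evolve_inter_eval κ hA m k _ hSm,
        evolve_safe κ hA m (k + 1) (Function.update ω (k + 1) y),
        Function.update_of_ne (by omega : k ≠ k + 1), Function.update_self]
    simp only [hinner]
    rw [lintegral_const_mul' _ _ (by
      by_cases hx : ω k ∈ A
      · simp [indicator_of_mem hx]
      · simp [indicator_of_notMem hx])]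
    rfl

end SB
lemma indicator_one_le_one (A : Set X) (x : X) : A.indicator (1 : X → ENNReal) x ≤ 1 := by
  by_cases hx : x ∈ A <;> simp [indicator_of_mem, indicator_of_notMem, hx]

lemma polVal_le_one (κ : ℕ → Kernel X X) [∀ i, IsMarkovKernel (κ i)] :
    ∀ (m k : ℕ) (x : X), polVal A κ k m x ≤ 1
  | 0, k, x => indicator_one_le_one A x
  | (m + 1), k, x => by
    calc polVal A κ k (m + 1) x
        = A.indicator 1 x * ∫⁻ y, polVal A κ (k + 1) m y ∂(κ k x) := rfl
      _ ≤ 1 * ∫⁻ _, (1 : ENNReal) ∂(κ k x) :=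
          mul_le_mul' (indicator_one_le_one A x)
            (lintegral_mono fun y => polVal_le_one κ m (k + 1) y)
      _ ≤ 1 := by simp

instance (T : Kernel (X × U) X) [IsMarkovKernel T] (π : Policy X U) (k : ℕ) :
    IsMarkovKernel (π.kernel T k) := by
  rw [Policy.kernel]; infer_instance

lemma policy_kernel_apply (T : Kernel (X × U) X) (π : Policy X U) (k : ℕ) (x : X) :
    π.kernel T k x = T (x, π.act k x) := rfl

lemma trajLaw_safe [MeasurableSingletonClass X] (T : Kernel (X × U) X)
    [IsMarkovKernel T] (π : Policy X U) (hA : MeasurableSet A) {N k : ℕ}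
    (hk : k ≤ N) (x : X) :
    trajLaw T π N k x (safeEvent A k N) = polVal A (π.kernel T) k (N - k) x := by
  haveI : ∀ i, IsMarkovKernel (π.kernel T i) := fun i => inferInstance
  have h := evolve_safe (A := A) (π.kernel T) hA (N - k) k (fun _ => x)
  rw [Nat.add_sub_cancel' hk] at h
  exact h

end Aux

variable [StandardBorelSpace X] [TopologicalSpace U]
  [TopologicalSpace.MetrizableSpace U] [CompactSpace U] [Nonempty U] [BorelSpace U]

/-- Theorem 2, minimum invariance, attainment: if at each time `k < N`
a measurable selector `μ_k^*` attains the infimum in the DP recursion, then the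
Markov policy `π^* = (μ_0^*, …, μ_{N-1}^*)` satisfies `V_k^{π^*} = W_k^min`
everywhere; in particular `W_k^min(x)` is the minimum over all Markov policies of the
probability of staying in `A` over `[k, N]`. -/
theorem min_dp_value_attained
    (T : Kernel (X × U) X) [IsMarkovKernel T]
    (N : ℕ) (A : Set X) (hA : MeasurableSet A)
    (Wmin : ℕ → X → ℝ) (hWmeas : ∀ k, Measurable (Wmin k))
    (hWN : ∀ x, Wmin N x = A.indicator 1 x)
    (hW : ∀ k < N, ∀ x,
      Wmin k x = ⨅ u : U, A.indicator (fun x' => ∫ y, Wmin (k + 1) y ∂(T (x', u))) x)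
    (μstar : ℕ → X → U) (hμstar : ∀ k, Measurable (μstar k))
    (hopt : ∀ k < N, ∀ x,
      A.indicator (fun x' => ∫ y, Wmin (k + 1) y ∂(T (x', μstar k x'))) x = Wmin k x) :
    (∀ k ≤ N, ∀ x,
        (trajLaw T ⟨μstar, hμstar⟩ N k x (safeEvent A k N)).toReal = Wmin k x) ∧
    (∀ k ≤ N, ∀ x,
        IsLeast
          (Set.range fun π : Policy X U =>
            (trajLaw T π N k x (safeEvent A k N)).toReal)
          (Wmin k x)) := by
  classical
  set π0 : Policy X U := ⟨μstar, hμstar⟩ with hπ0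
  -- bounds on Wmin
  have hbound : ∀ m k, k + m = N → ∀ x, 0 ≤ Wmin k x ∧ Wmin k x ≤ 1 := by
    intro m
    induction m with
    | zero =>
      intro k hk x
      have hkN : k = N := by omega
      subst hkN
      rw [hWN x]
      by_cases hx : x ∈ A <;>
        simp [indicator_of_mem, indicator_of_notMem, hx]
    | succ m ih =>
      intro k hk x
      have hkN : k < N := by omega
      have ih' : ∀ y, 0 ≤ Wmin (k + 1) y ∧ Wmin (k + 1) y ≤ 1 :=
        fun y => ih (k + 1) (by omega) y
      have hint1 : ∀ (x' : X) (u : U), Integrable (Wmin (k + 1)) (T (x', u)) := by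
        intro x' u
        refine Integrable.mono' (integrable_const 1)
          ((hWmeas (k + 1)).aestronglyMeasurable) (ae_of_all _ fun y => ?_)
        rw [Real.norm_eq_abs]
        exact abs_le.mpr ⟨by linarith [(ih' y).1], (ih' y).2⟩
      have hnn : ∀ u : U,
          0 ≤ A.indicator (fun x' => ∫ y, Wmin (k + 1) y ∂(T (x', u))) x :=
        fun u => indicator_nonneg
          (fun x' _ => integral_nonneg fun y => (ih' y).1) x
      rw [hW k hkN x]
      constructor
      · exact le_ciInf hnn
      · obtain ⟨u0⟩ := (inferInstance : Nonempty U)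
        refine ciInf_le_of_le ⟨0, by rintro _ ⟨u, rfl⟩; exact hnn u⟩ u0 ?_
        by_cases hx : x ∈ A
        · rw [indicator_of_mem hx]
          calc ∫ y, Wmin (k + 1) y ∂(T (x, u0))
              ≤ ∫ _, (1 : ℝ) ∂(T (x, u0)) :=
                integral_mono (hint1 x u0) (integrable_const 1) fun y => (ih' y).2
            _ = 1 := by simp
        · rw [indicator_of_notMem hx]; exact zero_le_one
  have hbound' : ∀ k, k ≤ N → ∀ x, 0 ≤ Wmin k x ∧ Wmin k x ≤ 1 :=
    fun k hk => hbound (N - k) k (by omega)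
  have hintg : ∀ j, j ≤ N → ∀ (x : X) (u : U), Integrable (Wmin j) (T (x, u)) := by
    intro j hj x u
    refine Integrable.mono' (integrable_const 1)
      ((hWmeas j).aestronglyMeasurable) (ae_of_all _ fun y => ?_)
    rw [Real.norm_eq_abs]
    exact abs_le.mpr ⟨by linarith [(hbound' j hj y).1], (hbound' j hj y).2⟩
  have hofR : ∀ j, j ≤ N → ∀ (x : X) (u : U),
      ∫⁻ y, ENNReal.ofReal (Wmin j y) ∂(T (x, u))
        = ENNReal.ofReal (∫ y, Wmin j y ∂(T (x, u))) :=
    fun j hj x u =>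
      (ofReal_integral_eq_lintegral_ofReal (hintg j hj x u)
        (ae_of_all _ fun y => (hbound' j hj y).1)).symm
  -- value of the optimal policy
  have hstar : ∀ m k, k + m = N → ∀ x,
      polVal A (π0.kernel T) k m x = ENNReal.ofReal (Wmin k x) := by
    intro m
    induction m with
    | zero =>
      intro k hk x
      have hkN : k = N := by omega
      subst hkN
      rw [hWN x]
      by_cases hx : x ∈ A <;>
        simp [polVal, indicator_of_mem, indicator_of_notMem, hx]
    | succ m ih =>
      intro k hk x
      have hkN : k < N := by omega
      have ih' : ∀ y, polVal A (π0.kernel T) (k + 1) m y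
          = ENNReal.ofReal (Wmin (k + 1) y) := fun y => ih (k + 1) (by omega) y
      calc polVal A (π0.kernel T) k (m + 1) x
          = A.indicator 1 x
              * ∫⁻ y, polVal A (π0.kernel T) (k + 1) m y ∂(T (x, μstar k x)) := by
            rw [show polVal A (π0.kernel T) k (m + 1) x
                = A.indicator 1 x * ∫⁻ y, polVal A (π0.kernel T) (k + 1) m y
                    ∂(π0.kernel T k x) from rfl, policy_kernel_apply]
        _ = A.indicator 1 x
              * ENNReal.ofReal (∫ y, Wmin (k + 1) y ∂(T (x, μstar k x))) := by
            simp only [ih']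
            rw [hofR (k + 1) (by omega)]
        _ = ENNReal.ofReal
              (A.indicator (fun x' => ∫ y, Wmin (k + 1) y ∂(T (x', μstar k x'))) x) := by
            by_cases hx : x ∈ A <;>
              simp [indicator_of_mem, indicator_of_notMem, hx]
        _ = ENNReal.ofReal (Wmin k x) := by rw [hopt k hkN x]
  -- lower bound for every policy
  have hlb : ∀ (π : Policy X U) (m k : ℕ), k + m = N → ∀ x,
      ENNReal.ofReal (Wmin k x) ≤ polVal A (π.kernel T) k m x := by
    intro π m
    induction m with
    | zero =>
      intro k hk x
      have hkN : k = N := by omega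
      subst hkN
      rw [hWN x]
      by_cases hx : x ∈ A <;>
        simp [polVal, indicator_of_mem, indicator_of_notMem, hx]
    | succ m ih =>
      intro k hk x
      have hkN : k < N := by omega
      have hnn : ∀ u : U,
          0 ≤ A.indicator (fun x' => ∫ y, Wmin (k + 1) y ∂(T (x', u))) x :=
        fun u => indicator_nonneg
          (fun x' _ => integral_nonneg fun y => (hbound' (k + 1) (by omega) y).1) x
      have hstep : Wmin k x
          ≤ A.indicator (fun x' => ∫ y, Wmin (k + 1) y ∂(T (x', π.act k x'))) x := by
        rw [hW k hkN x]
        refine le_trans (ciInf_le ⟨0, by rintro _ ⟨u, rfl⟩; exact hnn u⟩ (π.act k x)) ?_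
        by_cases hx : x ∈ A <;>
          simp [indicator_of_mem, indicator_of_notMem, hx]
      calc ENNReal.ofReal (Wmin k x)
          ≤ ENNReal.ofReal
              (A.indicator (fun x' => ∫ y, Wmin (k + 1) y ∂(T (x', π.act k x'))) x) :=
            ENNReal.ofReal_le_ofReal hstep
        _ = A.indicator 1 x
              * ENNReal.ofReal (∫ y, Wmin (k + 1) y ∂(T (x, π.act k x))) := by
            by_cases hx : x ∈ A <;>
              simp [indicator_of_mem, indicator_of_notMem, hx]
        _ = A.indicator 1 x
              * ∫⁻ y, ENNReal.ofReal (Wmin (k + 1) y) ∂(T (x, π.act k x)) := by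
            rw [hofR (k + 1) (by omega)]
        _ ≤ A.indicator 1 x
              * ∫⁻ y, polVal A (π.kernel T) (k + 1) m y ∂(T (x, π.act k x)) :=
            mul_le_mul_right
              (lintegral_mono fun y => ih (k + 1) (by omega) y) _
        _ = polVal A (π.kernel T) k (m + 1) x := by
            rw [show polVal A (π.kernel T) k (m + 1) x
                = A.indicator 1 x * ∫⁻ y, polVal A (π.kernel T) (k + 1) m y
                    ∂(π.kernel T k x) from rfl, policy_kernel_apply]
  have part1 : ∀ k ≤ N, ∀ x,
      (trajLaw T π0 N k x (safeEvent A k N)).toReal = Wmin k x := by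
    intro k hk x
    rw [trajLaw_safe T π0 hA hk x, hstar (N - k) k (by omega) x,
      ENNReal.toReal_ofReal (hbound' k hk x).1]
  refine ⟨part1, ?_⟩
  intro k hk x
  constructor
  · exact ⟨π0, part1 k hk x⟩
  · rintro v ⟨π, rfl⟩
    show Wmin k x ≤ (trajLaw T π N k x (safeEvent A k N)).toReal
    haveI : ∀ i, IsMarkovKernel (π.kernel T i) := fun i => inferInstance
    rw [trajLaw_safe T π hA hk x]
    have h2 : polVal A (π.kernel T) k (N - k) x ≠ ⊤ :=
      ne_top_of_le_ne_top ENNReal.one_ne_top (polVal_le_one (π.kernel T) (N - k) k x)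
    calc Wmin k x = (ENNReal.ofReal (Wmin k x)).toReal :=
          (ENNReal.toReal_ofReal (hbound' k hk x).1).symm
      _ ≤ _ := ENNReal.toReal_mono h2 (hlb π (N - k) k (by omega) x)

end StochasticSafety
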